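/- Let A be an n×n real positive definite matrix, K an m×m real positive definite matrix, and B an m×n real matrix such that the linear map x ↦ Bx from ℝⁿ to ℝᵐ is surjective. Let f : ℝ → ℝⁿ be continuously differentiable, g : ℝ → ℝᵐ continuous, and let u₀ ∈ ℝⁿ, p₀ ∈ ℝᵐ satisfy the compatibility condition A u₀ − Bᵀ p₀ = f(0). Then there exists a unique pair of differentiable functions u : ℝ → ℝⁿ, p : ℝ → ℝᵐ with u(0) = u₀, p(0) = p₀ such that for all t ∈ ℝ: A u(t) − Bᵀ p(t) = f(t) and B u'(t) + K p(t) = g(t). -/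

import Mathlib

open Matrix

open NormedSpace

section Aux

attribute [local instance] Matrix.linftyOpNormedRing Matrix.linftyOpNormedAlgebra

variable {m : ℕ} {t : ℝ}

private noncomputable def entryCLM (m : ℕ) (i j : Fin m) :
    Matrix (Fin m) (Fin m) ℝ →L[ℝ] ℝ :=
  LinearMap.toContinuousLinearMap
    { toFun := fun M => M i j
      map_add' := fun _ _ => rfl
      map_smul' := fun _ _ => rfl }

private lemma hasDerivAt_entry {E : ℝ → Matrix (Fin m) (Fin m) ℝ}
    {E' : Matrix (Fin m) (Fin m) ℝ} (hE : HasDerivAt E E' t) (i j : Fin m) :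
    HasDerivAt (fun s => E s i j) (E' i j) t := by
  exact (entryCLM m i j).hasFDerivAt.comp_hasDerivAt t hE

private lemma hasDerivAt_mulVec' {E : ℝ → Matrix (Fin m) (Fin m) ℝ}
    {E' : Matrix (Fin m) (Fin m) ℝ} {q : ℝ → Fin m → ℝ} {q' : Fin m → ℝ}
    (hE : HasDerivAt E E' t) (hq : HasDerivAt q q' t) :
    HasDerivAt (fun s => E s *ᵥ q s) (E' *ᵥ q t + E t *ᵥ q') t := by
  rw [hasDerivAt_pi]
  intro i
  have h : HasDerivAt (fun s => ∑ j, E s i j * q s j)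
      (∑ j, (E' i j * q t j + E t i j * q' j)) t :=
    HasDerivAt.fun_sum fun j _ => (hasDerivAt_entry hE i j).mul (hasDerivAt_pi.1 hq j)
  have h2 : (∑ j, (E' i j * q t j + E t i j * q' j))
      = (E' *ᵥ q t + E t *ᵥ q') i := by
    simp [Matrix.mulVec, dotProduct, Finset.sum_add_distrib]
  rw [h2] at h
  exact h

private lemma continuous_mulVec' {E : ℝ → Matrix (Fin m) (Fin m) ℝ} {q : ℝ → Fin m → ℝ}
    (hE : Continuous E) (hq : Continuous q) : Continuous fun s => E s *ᵥ q s := by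
  refine continuous_pi fun i => ?_
  simp only [Matrix.mulVec, dotProduct]
  exact continuous_finset_sum _ fun j _ =>
    ((entryCLM m i j).continuous.comp hE).mul ((continuous_apply j).comp hq)

private lemma hasDerivAt_expM (M : Matrix (Fin m) (Fin m) ℝ) (t : ℝ) :
    HasDerivAt (fun s : ℝ => exp (s • M)) (exp (t • M) * M) t :=
  hasDerivAt_exp_smul_const M t

private lemma continuous_expM (M : Matrix (Fin m) (Fin m) ℝ) :
    Continuous fun s : ℝ => exp (s • M) :=
  exp_continuous.comp (continuous_id.smul continuous_const)

private lemma exp_neg_mul_exp (M : Matrix (Fin m) (Fin m) ℝ) (t : ℝ) :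
    exp ((-t) • M) * exp (t • M) = 1 := by
  erw [← exp_add_of_commute (((Commute.refl M).smul_left (-t)).smul_right t)]
  rw [← add_smul, neg_add_cancel, zero_smul, exp_zero]


private lemma ode_exists (M : Matrix (Fin m) (Fin m) ℝ) (c : ℝ → Fin m → ℝ)
    (hc : Continuous c) (p₀ : Fin m → ℝ) :
    ∃ p : ℝ → Fin m → ℝ, p 0 = p₀ ∧ ∀ t, HasDerivAt p (c t - M *ᵥ p t) t := by
  set w : ℝ → Fin m → ℝ := fun s => exp (s • M) *ᵥ c s with hw_def
  have hw : Continuous w := continuous_mulVec' (continuous_expM M) hc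
  set F : ℝ → Fin m → ℝ := fun t => ∫ s in (0:ℝ)..t, w s with hF_def
  have hF : ∀ t, HasDerivAt F (w t) t := fun t =>
    intervalIntegral.integral_hasDerivAt_right (hw.intervalIntegrable _ _)
      (hw.stronglyMeasurableAtFilter _ _) hw.continuousAt
  set p : ℝ → Fin m → ℝ := fun t => exp ((-t) • M) *ᵥ (p₀ + F t) with hp_def
  have hcomm : ∀ t : ℝ, Commute M (exp ((-t) • M)) := fun t =>
    (((Commute.refl M).smul_right (-t)).exp_right)
  refine ⟨p, ?_, fun t => ?_⟩
  · simp [hp_def, hF_def, exp_zero]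
  · have hE : HasDerivAt (fun s : ℝ => exp ((-s) • M))
        (-(exp ((-t) • M) * M)) t := by
      have h1 := hasDerivAt_expM M (-t)
      have h2 : HasDerivAt (fun s : ℝ => -s) (-1) t := (hasDerivAt_id t).neg
      have := h1.scomp t h2
      simp only [Function.comp_def, neg_one_smul] at this
      exact this
    have hq : HasDerivAt (fun s => p₀ + F s) (w t) t := (hF t).const_add p₀
    have hder := hasDerivAt_mulVec' hE hq
    have hval : (-(exp ((-t) • M) * M)) *ᵥ (p₀ + F t) + exp ((-t) • M) *ᵥ w t
        = c t - M *ᵥ p t := by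
      have h1 : exp ((-t) • M) *ᵥ w t = c t := by
        rw [hw_def]
        rw [mulVec_mulVec, exp_neg_mul_exp, one_mulVec]
      have h2 : (-(exp ((-t) • M) * M)) *ᵥ (p₀ + F t) = -(M *ᵥ p t) := by
        rw [neg_mulVec, ← (hcomm t).eq, ← mulVec_mulVec]
      rw [h1, h2]
      abel
    rw [hval] at hder
    exact hder

private lemma ode_unique (M : Matrix (Fin m) (Fin m) ℝ) (c : ℝ → Fin m → ℝ)
    {p₁ p₂ : ℝ → Fin m → ℝ}
    (h₁ : ∀ t, HasDerivAt p₁ (c t - M *ᵥ p₁ t) t)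
    (h₂ : ∀ t, HasDerivAt p₂ (c t - M *ᵥ p₂ t) t)
    (h0 : p₁ 0 = p₂ 0) : p₁ = p₂ := by
  set q : ℝ → Fin m → ℝ := fun t => p₁ t - p₂ t with hq_def
  have hq : ∀ t, HasDerivAt q (-(M *ᵥ q t)) t := by
    intro t
    have := (h₁ t).sub (h₂ t)
    have e : -(M *ᵥ q t) = c t - M *ᵥ p₁ t - (c t - M *ᵥ p₂ t) := by
      simp [hq_def, Matrix.mulVec_sub]
    rw [e]; exact this
  set r : ℝ → Fin m → ℝ := fun t => exp (t • M) *ᵥ q t with hr_def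
  have hr : ∀ t, HasDerivAt r 0 t := by
    intro t
    have := hasDerivAt_mulVec' (hasDerivAt_expM M t) (hq t)
    convert this using 1
    rw [Matrix.mulVec_neg, ← mulVec_mulVec]
    abel
  have hr0 : r 0 = 0 := by simp [hr_def, hq_def, h0, exp_zero]
  have hrconst : ∀ t, r t = r 0 := fun t =>
    is_const_of_deriv_eq_zero (fun s => (hr s).differentiableAt)
      (fun s => (hr s).deriv) t 0
  funext t
  have h1 : exp (t • M) *ᵥ q t = 0 := (hrconst t).trans hr0
  have h2 := congrArg (fun v => exp ((-t) • M) *ᵥ v) h1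
  simp only [mulVec_mulVec, exp_neg_mul_exp, one_mulVec, Matrix.mulVec_zero] at h2
  exact sub_eq_zero.1 h2

end Aux

private lemma hasDerivAt_const_mulVec {k m : ℕ} (N : Matrix (Fin k) (Fin m) ℝ)
    {q : ℝ → Fin m → ℝ} {q' : Fin m → ℝ} {t : ℝ} (hq : HasDerivAt q q' t) :
    HasDerivAt (fun s => N *ᵥ q s) (N *ᵥ q') t := by
  exact (LinearMap.toContinuousLinearMap N.mulVecLin).hasFDerivAt.comp_hasDerivAt t hq

private lemma continuous_const_mulVec {k m : ℕ} (N : Matrix (Fin k) (Fin m) ℝ)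
    {q : ℝ → Fin m → ℝ} (hq : Continuous q) : Continuous fun s => N *ᵥ q s := by
  exact (LinearMap.toContinuousLinearMap N.mulVecLin).continuous.comp hq

/-- Existence and uniqueness for the index-1 DAE. With `A`, `K` positive
definite, `B` with surjective `x ↦ B x`, `f` continuously differentiable, `g` continuous,
and compatible initial data `A u₀ − Bᵀ p₀ = f(0)`, there is a unique pair of differentiable
functions `(u, p)` with `u(0) = u₀`, `p(0) = p₀`, satisfying for all `t`:
`A u(t) − Bᵀ p(t) = f(t)` and `B u'(t) + K p(t) = g(t)`. -/
theorem stmt_12 {n m : ℕ} (A : Matrix (Fin n) (Fin n) ℝ) (K : Matrix (Fin m) (Fin m) ℝ)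
    (B : Matrix (Fin m) (Fin n) ℝ) (hA : A.PosDef) (hK : K.PosDef)
    (hB : Function.Surjective B.mulVec)
    (f : ℝ → Fin n → ℝ) (g : ℝ → Fin m → ℝ) (hf : ContDiff ℝ 1 f) (hg : Continuous g)
    (u₀ : Fin n → ℝ) (p₀ : Fin m → ℝ)
    (hcompat : A.mulVec u₀ - Bᵀ.mulVec p₀ = f 0) :
    ∃! up : (ℝ → Fin n → ℝ) × (ℝ → Fin m → ℝ),
      Differentiable ℝ up.1 ∧ Differentiable ℝ up.2 ∧
        up.1 0 = u₀ ∧ up.2 0 = p₀ ∧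
        ∀ t : ℝ, A.mulVec (up.1 t) - Bᵀ.mulVec (up.2 t) = f t ∧
          B.mulVec (deriv up.1 t) + K.mulVec (up.2 t) = g t := by
  classical
  have hAdet : IsUnit A.det := (Matrix.isUnit_iff_isUnit_det A).mp hA.isUnit
  have hA1 : ∀ v, A *ᵥ (A⁻¹ *ᵥ v) = v := fun v => by
    rw [mulVec_mulVec, Matrix.mul_nonsing_inv _ hAdet, one_mulVec]
  have hA2 : ∀ v, A⁻¹ *ᵥ (A *ᵥ v) = v := fun v => by
    rw [mulVec_mulVec, Matrix.nonsing_inv_mul _ hAdet, one_mulVec]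
  have hBT : ∀ x : Fin m → ℝ, Bᵀ *ᵥ x = 0 → x = 0 := by
    intro x hx
    obtain ⟨y, hy⟩ := hB x
    have hxx : x ⬝ᵥ x = 0 := by
      nth_rewrite 2 [← hy]
      rw [Matrix.dotProduct_mulVec, ← Matrix.mulVec_transpose, hx, zero_dotProduct]
    exact dotProduct_self_eq_zero.mp hxx
  have hAinvPD := hA.inv
  have hAt : Aᵀ = A := by
    rw [← Matrix.conjTranspose_eq_transpose_of_trivial]; exact hA.isHermitian
  have hAinvT : (A⁻¹)ᵀ = A⁻¹ := by rw [Matrix.transpose_nonsing_inv, hAt]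
  have hS : (B * A⁻¹ * Bᵀ).PosDef := by
    refine Matrix.posDef_iff_dotProduct_mulVec.2 ⟨?_, ?_⟩
    · show (B * A⁻¹ * Bᵀ)ᴴ = B * A⁻¹ * Bᵀ
      rw [Matrix.conjTranspose_eq_transpose_of_trivial]
      simp [Matrix.transpose_mul, hAinvT, Matrix.mul_assoc]
    · intro x hx
      have hBx : Bᵀ *ᵥ x ≠ 0 := fun h => hx (hBT x h)
      have hpos := (Matrix.posDef_iff_dotProduct_mulVec.1 hAinvPD).2 hBx
      have e : star x ⬝ᵥ ((B * A⁻¹ * Bᵀ) *ᵥ x)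
          = star (Bᵀ *ᵥ x) ⬝ᵥ (A⁻¹ *ᵥ (Bᵀ *ᵥ x)) := by
        rw [star_trivial, star_trivial, ← mulVec_mulVec, ← mulVec_mulVec,
          Matrix.dotProduct_mulVec, ← Matrix.mulVec_transpose]
      rw [e]; exact hpos
  have hSdet : IsUnit (B * A⁻¹ * Bᵀ).det :=
    (Matrix.isUnit_iff_isUnit_det _).mp hS.isUnit
  have hS1 : ∀ v, (B * A⁻¹ * Bᵀ) *ᵥ ((B * A⁻¹ * Bᵀ)⁻¹ *ᵥ v) = v := fun v => by
    rw [mulVec_mulVec, Matrix.mul_nonsing_inv _ hSdet, one_mulVec]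
  have hS2 : ∀ v, (B * A⁻¹ * Bᵀ)⁻¹ *ᵥ ((B * A⁻¹ * Bᵀ) *ᵥ v) = v := fun v => by
    rw [mulVec_mulVec, Matrix.nonsing_inv_mul _ hSdet, one_mulVec]
  have hfc : Continuous (deriv f) := hf.continuous_deriv le_rfl
  have hf_diff : Differentiable ℝ f := hf.differentiable one_ne_zero
  have hc : Continuous (fun t => (B * A⁻¹ * Bᵀ)⁻¹ *ᵥ (g t - (B * A⁻¹) *ᵥ deriv f t)) :=
    continuous_const_mulVec _ (hg.sub (continuous_const_mulVec _ hfc))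
  obtain ⟨p, hp0, hp⟩ := ode_exists ((B * A⁻¹ * Bᵀ)⁻¹ * K)
    (fun t => (B * A⁻¹ * Bᵀ)⁻¹ *ᵥ (g t - (B * A⁻¹) *ᵥ deriv f t)) hc p₀
  have hfold : ∀ v, B *ᵥ (A⁻¹ *ᵥ (Bᵀ *ᵥ v)) = (B * A⁻¹ * Bᵀ) *ᵥ v := fun v => by
    rw [mulVec_mulVec, mulVec_mulVec]
  have hchain : ∀ (q : Fin m → ℝ) (z : Fin n → ℝ),
      B *ᵥ (A⁻¹ *ᵥ (Bᵀ *ᵥ q + z)) = (B * A⁻¹ * Bᵀ) *ᵥ q + (B * A⁻¹) *ᵥ z := fun q z => by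
    rw [Matrix.mulVec_add, Matrix.mulVec_add, hfold, mulVec_mulVec]
  have hKfold : ∀ v, (B * A⁻¹ * Bᵀ) *ᵥ (((B * A⁻¹ * Bᵀ)⁻¹ * K) *ᵥ v) = K *ᵥ v := fun v => by
    rw [mulVec_mulVec, ← Matrix.mul_assoc, Matrix.mul_nonsing_inv _ hSdet, Matrix.one_mul]
  set u : ℝ → Fin n → ℝ := fun t => A⁻¹ *ᵥ (Bᵀ *ᵥ p t + f t) with hu_def
  have hu : ∀ t, HasDerivAt u
      (A⁻¹ *ᵥ (Bᵀ *ᵥ ((B * A⁻¹ * Bᵀ)⁻¹ *ᵥ (g t - (B * A⁻¹) *ᵥ deriv f t)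
        - ((B * A⁻¹ * Bᵀ)⁻¹ * K) *ᵥ p t) + deriv f t)) t := fun t =>
    hasDerivAt_const_mulVec _ ((hasDerivAt_const_mulVec _ (hp t)).add (hf_diff t).hasDerivAt)
  refine ⟨(u, p), ⟨fun t => (hu t).differentiableAt, fun t => (hp t).differentiableAt,
    ?_, hp0, fun t => ⟨?_, ?_⟩⟩, ?_⟩
  · show A⁻¹ *ᵥ (Bᵀ *ᵥ p 0 + f 0) = u₀
    rw [hp0, ← hcompat]
    have e : Bᵀ *ᵥ p₀ + (A *ᵥ u₀ - Bᵀ *ᵥ p₀) = A *ᵥ u₀ := by abel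
    rw [e, hA2]
  · show A *ᵥ (A⁻¹ *ᵥ (Bᵀ *ᵥ p t + f t)) - Bᵀ *ᵥ p t = f t
    rw [hA1]; abel
  · show B *ᵥ deriv u t + K *ᵥ p t = g t
    rw [(hu t).deriv, hchain, Matrix.mulVec_sub, hS1, hKfold]
    abel
  · rintro ⟨u₂, p₂⟩ ⟨hdu₂, hdp₂, hu₂0, hp₂0, hsys⟩
    have hu₂eq : ∀ t, u₂ t = A⁻¹ *ᵥ (Bᵀ *ᵥ p₂ t + f t) := by
      intro t
      have h := (hsys t).1
      have h' : A *ᵥ u₂ t = Bᵀ *ᵥ p₂ t + f t := by rw [← h]; abel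
      rw [← hA2 (u₂ t), h']
    have hu₂d : ∀ t, HasDerivAt u₂ (A⁻¹ *ᵥ (Bᵀ *ᵥ deriv p₂ t + deriv f t)) t := by
      intro t
      have he : u₂ = fun s => A⁻¹ *ᵥ (Bᵀ *ᵥ p₂ s + f s) := funext hu₂eq
      rw [he]
      exact hasDerivAt_const_mulVec _
        ((hasDerivAt_const_mulVec _ (hdp₂ t).hasDerivAt).add (hf_diff t).hasDerivAt)
    have hp₂ode : ∀ t, HasDerivAt p₂
        ((fun s => (B * A⁻¹ * Bᵀ)⁻¹ *ᵥ (g s - (B * A⁻¹) *ᵥ deriv f s)) t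
          - ((B * A⁻¹ * Bᵀ)⁻¹ * K) *ᵥ p₂ t) t := by
      intro t
      have h2 := (hsys t).2
      rw [(hu₂d t).deriv, hchain] at h2
      have h3 : (B * A⁻¹ * Bᵀ) *ᵥ deriv p₂ t
          = g t - (B * A⁻¹) *ᵥ deriv f t - K *ᵥ p₂ t := by rw [← h2]; abel
      have h4 : deriv p₂ t
          = (B * A⁻¹ * Bᵀ)⁻¹ *ᵥ (g t - (B * A⁻¹) *ᵥ deriv f t - K *ᵥ p₂ t) := by
        rw [← h3, hS2]
      have h5 : (B * A⁻¹ * Bᵀ)⁻¹ *ᵥ (g t - (B * A⁻¹) *ᵥ deriv f t - K *ᵥ p₂ t)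
          = (B * A⁻¹ * Bᵀ)⁻¹ *ᵥ (g t - (B * A⁻¹) *ᵥ deriv f t)
            - ((B * A⁻¹ * Bᵀ)⁻¹ * K) *ᵥ p₂ t := by
        rw [Matrix.mulVec_sub, mulVec_mulVec]
      have h6 := (hdp₂ t).hasDerivAt
      rw [h4, h5] at h6
      exact h6
    have hpeq : p₂ = p := ode_unique _ _ hp₂ode hp (hp₂0.trans hp0.symm)
    have hueq : u₂ = u := funext fun t => by rw [hu₂eq t, hpeq]
    exact Prod.ext hueq hpeq
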